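/- For any natural number k, there exist a dimension d and a board size n such that n^k queens do not suffice to attack all board positions; formally, for every k there exist d and n such that for every finite set Q of board positions of the d-dimensional chess space of size n with |Q| ≤ n^k, some board position x : Fin d → Fin n is neither in Q nor attacked by any queen in Q. -/

import Mathlib

/-- An attack vector in a `d`-dimensional chess space: a function `δ : Fin d → ℤ`
with every component in `{-1, 0, 1}` and not identically zero. -/
def IsAttackVector (d : ℕ) (δ : Fin d → ℤ) : Prop :=
  (∀ i, δ i ∈ ({-1, 0, 1} : Set ℤ)) ∧ δ ≠ 0

/-- A queen at `q` attacks a board position `x` if `x ≠ q` and `x` lies at a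
positive scalar distance from `q` along some attack vector. -/
def Attacks {n d : ℕ} (q x : Fin d → Fin n) : Prop :=
  x ≠ q ∧ ∃ δ : Fin d → ℤ, IsAttackVector d δ ∧
    ∃ s : ℤ, 0 < s ∧ ∀ i, (x i : ℤ) = (q i : ℤ) + s * δ i

open Classical in
lemma attacked_card_le {n d : ℕ} (hn : 0 < n) (q : Fin d → Fin n) :
    (Finset.univ.filter (fun x => Attacks q x)).card ≤ 3 ^ d * n := by
  classical
  set g : (Fin d → Fin 3) × Fin n → (Fin d → Fin n) := fun p i =>
    (⟨((q i : ℤ) + (p.2 : ℤ) * ((p.1 i : ℤ) - 1)).toNat % n, Nat.mod_lt _ hn⟩ : Fin n)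
  have hsub : (Finset.univ.filter (fun x => Attacks q x)) ⊆
      Finset.image g Finset.univ := by
    intro x hx
    rw [Finset.mem_filter] at hx
    obtain ⟨-, hxq, δ, ⟨hδr, hδ0⟩, s, hs, hxeq⟩ := hx
    -- encode δ
    have hδval : ∀ i, δ i = -1 ∨ δ i = 0 ∨ δ i = 1 := by
      intro i
      have := hδr i
      simpa [Set.mem_insert_iff] using this
    have he3 : ∀ i, (δ i + 1).toNat < 3 := by
      intro i; rcases hδval i with h | h | h <;> simp [h]
    set e : Fin d → Fin 3 := fun i => ⟨(δ i + 1).toNat, he3 i⟩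
    have hei : ∀ i, ((e i : ℤ)) - 1 = δ i := by
      intro i
      simp only [e]
      rcases hδval i with h | h | h <;> simp [h]
    -- s < n
    have hsn : s < n := by
      obtain ⟨i, hi⟩ : ∃ i, δ i ≠ 0 := by
        by_contra h
        push_neg at h
        exact hδ0 (funext h)
      have hx1 : (x i : ℤ) < n := by exact_mod_cast (x i).2
      have hq1 : (q i : ℤ) < n := by exact_mod_cast (q i).2
      have hx0 : (0 : ℤ) ≤ (x i : ℤ) := by positivity
      have hq0 : (0 : ℤ) ≤ (q i : ℤ) := by positivity
      have := hxeq i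
      rcases hδval i with h | h | h
      · rw [h] at this; omega
      · exact absurd h hi
      · rw [h] at this; omega
    have hstoNat : s.toNat < n := by omega
    rw [Finset.mem_image]
    refine ⟨(e, ⟨s.toNat, hstoNat⟩), Finset.mem_univ _, ?_⟩
    funext i
    apply Fin.ext
    simp only [g]
    have hsz : ((s.toNat : ℤ)) = s := Int.toNat_of_nonneg (le_of_lt hs)
    have : (q i : ℤ) + (s.toNat : ℤ) * ((e i : ℤ) - 1) = (x i : ℤ) := by
      rw [hsz, hei i, ← hxeq i]
    rw [this]
    have hxn : (x i : ℕ) < n := (x i).2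
    simp [Nat.mod_eq_of_lt hxn]
  calc (Finset.univ.filter (fun x => Attacks q x)).card
      ≤ (Finset.image g Finset.univ).card := Finset.card_le_card hsub
    _ ≤ (Finset.univ : Finset ((Fin d → Fin 3) × Fin n)).card := Finset.card_image_le
    _ = 3 ^ d * n := by
        rw [Finset.card_univ, Fintype.card_prod, Fintype.card_fun,
          Fintype.card_fin, Fintype.card_fin]
        rw [Fintype.card_fin]

theorem exists_board_nk_queens_insufficient (k : ℕ) :
    ∃ d n : ℕ, ∀ Q : Finset (Fin d → Fin n), Q.card ≤ n ^ k →
      ∃ x : Fin d → Fin n, x ∉ Q ∧ ∀ q ∈ Q, ¬ Attacks q x := by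
  classical
  set m : ℕ := 3 ^ (k + 2) with hm
  refine ⟨k + 2, m + 2, ?_⟩
  set n : ℕ := m + 2 with hn
  intro Q hQ
  have hnpos : 0 < n := by positivity
  set B : Finset (Fin (k+2) → Fin n) :=
    Q ∪ Q.biUnion (fun q => Finset.univ.filter (fun x => Attacks q x)) with hB
  have hBcard : B.card < n ^ (k + 2) := by
    have h1 : B.card ≤ Q.card + (Q.biUnion
        (fun q => Finset.univ.filter (fun x => Attacks q x))).card :=
      Finset.card_union_le _ _
    have h2 : (Q.biUnion (fun q => Finset.univ.filter (fun x => Attacks q x))).card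
        ≤ Q.card * (3 ^ (k+2) * n) := by
      calc (Q.biUnion (fun q => Finset.univ.filter (fun x => Attacks q x))).card
          ≤ ∑ q ∈ Q, (Finset.univ.filter (fun x => Attacks q x)).card :=
            Finset.card_biUnion_le
        _ ≤ ∑ _q ∈ Q, (3 ^ (k+2) * n) :=
            Finset.sum_le_sum (fun q _ => attacked_card_le hnpos q)
        _ = Q.card * (3 ^ (k+2) * n) := by rw [Finset.sum_const, smul_eq_mul]
    have h3 : B.card ≤ n ^ k * (1 + m * n) := by
      have := le_trans h1 (add_le_add hQ (le_trans h2 (by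
        exact Nat.mul_le_mul_right _ hQ)))
      calc B.card ≤ n ^ k + n ^ k * (3 ^ (k+2) * n) := this
        _ = n ^ k * (1 + m * n) := by ring
    have h4 : 1 + m * n < n ^ 2 := by
      have : 1 + m * n = (m + 1) ^ 2 := by rw [hn]; ring
      rw [this, hn]
      have : m + 1 < m + 2 := by omega
      exact Nat.pow_lt_pow_left this (by norm_num)
    calc B.card ≤ n ^ k * (1 + m * n) := h3
      _ < n ^ k * n ^ 2 := by
          exact Nat.mul_lt_mul_of_pos_left h4 (Nat.pow_pos hnpos)
      _ = n ^ (k + 2) := by rw [← pow_add]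
  by_contra hcon
  push_neg at hcon
  have huniv : (Finset.univ : Finset (Fin (k+2) → Fin n)) ⊆ B := by
    intro x _
    rcases Classical.em (x ∈ Q) with h | h
    · exact Finset.mem_union_left _ h
    · obtain ⟨q, hqQ, hatt⟩ := hcon x h
      refine Finset.mem_union_right _ ?_
      rw [Finset.mem_biUnion]
      exact ⟨q, hqQ, by simp [hatt]⟩
  have hcard : (Finset.univ : Finset (Fin (k+2) → Fin n)).card = n ^ (k+2) := by
    simp [Finset.card_univ]
  have := Finset.card_le_card huniv
  omega
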